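/- arXiv:1102.2672 — 2 statements merged into one kernel-verified Lean document; each statement's English description precedes it below -/
import Mathlib

section
/- Let d, n ≥ 1 be integers, ρ ∈ ℂ with ρⁿ = 1, m an integer, c₁, …, c_d ∈ ℂ and b₁, …, b_d ∈ ℝ. For i = 1, …, d and j ∈ ℤ/nℤ define the quadratic p_{i,j}(u) = −conj(cᵢ)·ρ^{−j}·u² + 2bᵢ·u + cᵢ·ρ^{j}. Then for all z, u ∈ ℂ: ∏_{i=1}^{d} ∏_{j ∈ ℤ/nℤ} ( ρᵐ z − p_{i,j}(ρᵐ u) ) = ∏_{i=1}^{d} ∏_{j ∈ ℤ/nℤ} ( z − p_{i,j}(u) ). In other words, the defining equation xy = ∏_{i,j}(z − p_{i,j}(u)) of the twistor hypersurface is invariant under the substitution (x, y, z, u) ↦ (ρx, ρ⁻¹y, ρᵐz, ρᵐu). -/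
/-- With `p_{i,j}(u) = −conj(cᵢ)·ρ^(−j)·u² + 2bᵢ·u + cᵢ·ρ^j` (for `i = 1,…,d`, `j ∈ ℤ/nℤ`)
and `ρ^n = 1`, for all `z, u ∈ ℂ`:
`∏_{i,j}(ρ^m z − p_{i,j}(ρ^m u)) = ∏_{i,j}(z − p_{i,j}(u))`; i.e. the twistor hypersurface
`xy = ∏_{i,j}(z − p_{i,j}(u))` is invariant under `(x,y,z,u) ↦ (ρx, ρ⁻¹y, ρ^m z, ρ^m u)`. -/
theorem twistor_hypersurface_invariant (d n : ℕ) (hd : 1 ≤ d) (hn : 1 ≤ n)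
    (ρ : ℂ) (hρ : ρ ^ n = 1) (m : ℤ) (c : Fin d → ℂ) (bb : Fin d → ℝ) (z u : ℂ) :
    (∏ i, ∏ j ∈ Finset.range n,
        (ρ ^ m * z -
          (-(starRingEnd ℂ) (c i) * ρ ^ (-(j : ℤ)) * (ρ ^ m * u) ^ 2
            + 2 * ((bb i : ℝ) : ℂ) * (ρ ^ m * u) + c i * ρ ^ (j : ℤ)))) =
    ∏ i, ∏ j ∈ Finset.range n,
        (z - (-(starRingEnd ℂ) (c i) * ρ ^ (-(j : ℤ)) * u ^ 2
            + 2 * ((bb i : ℝ) : ℂ) * u + c i * ρ ^ (j : ℤ))) := by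
  have hρ0 : ρ ≠ 0 := by
    intro h
    rw [h, zero_pow (by omega)] at hρ
    exact one_ne_zero hρ.symm
  have hn0 : (0:ℤ) < n := by exact_mod_cast hn
  have hper : ∀ k : ℤ, ρ ^ k = ρ ^ (k % n) := by
    intro k
    conv_lhs => rw [← Int.emod_add_mul_ediv k n]
    rw [zpow_add₀ hρ0, zpow_mul, zpow_natCast, hρ, one_zpow, mul_one]
  refine Finset.prod_congr rfl fun i _ => ?_
  set g : ℤ → ℂ := fun k =>
    z - (-(starRingEnd ℂ) (c i) * ρ ^ (-k) * u ^ 2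
      + 2 * ((bb i : ℝ) : ℂ) * u + c i * ρ ^ k) with hg
  have hgper : ∀ k : ℤ, g k = g (k % n) := by
    intro k
    simp only [hg]
    rw [hper k, zpow_neg, hper k, ← zpow_neg]
  have hfac : ∀ j : ℕ,
      (ρ ^ m * z -
        (-(starRingEnd ℂ) (c i) * ρ ^ (-(j : ℤ)) * (ρ ^ m * u) ^ 2
          + 2 * ((bb i : ℝ) : ℂ) * (ρ ^ m * u) + c i * ρ ^ (j : ℤ)))
      = ρ ^ m * g ((j : ℤ) - m) := by
    intro j
    simp only [hg]
    have e1 : ρ ^ m * ρ ^ (-((j:ℤ) - m)) = ρ ^ (-(j:ℤ)) * (ρ ^ m * ρ ^ m) := by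
      rw [← zpow_add₀ hρ0, ← zpow_add₀ hρ0, ← zpow_add₀ hρ0]
      congr 1
      ring
    have e2 : ρ ^ m * ρ ^ ((j:ℤ) - m) = ρ ^ (j:ℤ) := by
      rw [← zpow_add₀ hρ0]
      congr 1
      ring
    linear_combination (-(starRingEnd ℂ) (c i) * u ^ 2) * e1 + c i * e2
  calc (∏ j ∈ Finset.range n,
        (ρ ^ m * z -
          (-(starRingEnd ℂ) (c i) * ρ ^ (-(j : ℤ)) * (ρ ^ m * u) ^ 2
            + 2 * ((bb i : ℝ) : ℂ) * (ρ ^ m * u) + c i * ρ ^ (j : ℤ))))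
      = ∏ j ∈ Finset.range n, ρ ^ m * g ((j : ℤ) - m) := by
        exact Finset.prod_congr rfl fun j _ => hfac j
    _ = (ρ ^ m) ^ n * ∏ j ∈ Finset.range n, g ((j : ℤ) - m) := by
        rw [Finset.prod_mul_distrib, Finset.prod_const, Finset.card_range]
    _ = ∏ j ∈ Finset.range n, g ((j : ℤ) - m) := by
        rw [← zpow_natCast (ρ ^ m) n, ← zpow_mul, mul_comm m (n:ℤ), zpow_mul, zpow_natCast, hρ,
          one_zpow, one_mul]
    _ = ∏ j ∈ Finset.range n, g (j : ℤ) := by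
        refine Finset.prod_nbij' (fun j => (((j : ℤ) - m) % n).toNat)
          (fun j => (((j : ℤ) + m) % n).toNat) ?_ ?_ ?_ ?_ ?_
        · intro j hj
          simp only [Finset.mem_range] at *
          have h1 := Int.emod_nonneg ((j:ℤ) - m) (by omega : (n:ℤ) ≠ 0)
          have h2 := Int.emod_lt_of_pos ((j:ℤ) - m) hn0
          omega
        · intro j hj
          simp only [Finset.mem_range] at *
          have h1 := Int.emod_nonneg ((j:ℤ) + m) (by omega : (n:ℤ) ≠ 0)
          have h2 := Int.emod_lt_of_pos ((j:ℤ) + m) hn0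
          omega
        · intro j hj
          simp only [Finset.mem_range] at hj
          have h1 := Int.emod_nonneg ((j:ℤ) - m) (by omega : (n:ℤ) ≠ 0)
          have key : (((((j:ℤ) - m) % n).toNat : ℤ) + m) % n = (j:ℤ) := by
            rw [Int.toNat_of_nonneg h1, Int.add_emod, Int.emod_emod_of_dvd _ dvd_rfl,
              ← Int.add_emod, sub_add_cancel]
            exact Int.emod_eq_of_lt (by positivity) (by exact_mod_cast hj)
          omega
        · intro j hj
          simp only [Finset.mem_range] at hj
          have h1 := Int.emod_nonneg ((j:ℤ) + m) (by omega : (n:ℤ) ≠ 0)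
          have key : (((((j:ℤ) + m) % n).toNat : ℤ) - m) % n = (j:ℤ) := by
            rw [Int.toNat_of_nonneg h1, Int.sub_emod, Int.emod_emod_of_dvd _ dvd_rfl,
              ← Int.sub_emod, add_sub_cancel_right]
            exact Int.emod_eq_of_lt (by positivity) (by exact_mod_cast hj)
          omega
        · intro j hj
          simp only [Finset.mem_range] at hj
          have h1 := Int.emod_nonneg ((j:ℤ) - m) (by omega : (n:ℤ) ≠ 0)
          rw [hgper ((j:ℤ) - m)]
          congr 1
          rw [Int.toNat_of_nonneg h1]
end

section
/- Let d, n ≥ 1 be integers, ρ ∈ ℂ with ρⁿ = 1, m an integer, c₁, …, c_d ∈ ℂ and b, b₁, …, b_d ∈ ℝ. For i = 1,…,d and j ∈ ℤ/nℤ set a_{i,j} = −conj(cᵢ)·ρ^{−j}, and for w ∈ ℂ set Δ_{i,j}(w) = √((b−bᵢ)² + |w + a_{i,j}|²). Suppose w ∈ ℂ satisfies w + a_{i,j} ≠ 0 for all i, j, and define δ(w) = Σ_{i=1}^{d} Σ_{j ∈ ℤ/nℤ} ((b − bᵢ) − Δ_{i,j}(w)) / ( Δ_{i,j}(w) · (w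 + a_{i,j}) ). Then δ(ρ^{−m} w) = ρᵐ · δ(w). -/
/-- Equivariance of the coefficient `δ` of Hitchin's metric: with
`a_{i,j} = −conj(cᵢ)·ρ^(−j)`, `Δ_{i,j}(w) = √((b−bᵢ)² + |w + a_{i,j}|²)`, `ρ^n = 1`,
and `δ(w) = Σ_{i,j} ((b − bᵢ) − Δ_{i,j}(w)) / (Δ_{i,j}(w)·(w + a_{i,j}))`, if
`w + a_{i,j} ≠ 0` for all `i, j`, then `δ(ρ^(−m) w) = ρ^m · δ(w)`. -/
theorem delta_equivariant (d n : ℕ) (hd : 1 ≤ d) (hn : 1 ≤ n)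
    (ρ : ℂ) (hρ : ρ ^ n = 1) (m : ℤ) (c : Fin d → ℂ) (b : ℝ) (bb : Fin d → ℝ)
    (aa : Fin d → ℕ → ℂ) (haa : ∀ i j, aa i j = -(starRingEnd ℂ) (c i) * ρ ^ (-(j : ℤ)))
    (Δ : Fin d → ℕ → ℂ → ℝ)
    (hΔ : ∀ i j (w' : ℂ), Δ i j w' = Real.sqrt ((b - bb i) ^ 2 + ‖w' + aa i j‖ ^ 2))
    (δ : ℂ → ℂ)
    (hδ : ∀ w' : ℂ, δ w' = ∑ i, ∑ j ∈ Finset.range n,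
        (((b - bb i : ℝ) : ℂ) - ((Δ i j w' : ℝ) : ℂ)) / (((Δ i j w' : ℝ) : ℂ) * (w' + aa i j)))
    (w : ℂ) (hw : ∀ i : Fin d, ∀ j ∈ Finset.range n, w + aa i j ≠ 0) :
    δ (ρ ^ (-m) * w) = ρ ^ m * δ w := by
  have hn0 : (0:ℤ) < (n:ℤ) := by exact_mod_cast hn
  have hρ0 : ρ ≠ 0 := by
    intro h
    rw [h, zero_pow (by omega : n ≠ 0)] at hρ
    exact zero_ne_one hρ
  have hρz : ρ ^ (n:ℤ) = 1 := by rw [zpow_natCast, hρ]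
  have hper : ∀ a t : ℤ, ρ ^ (a + (n:ℤ) * t) = ρ ^ a := by
    intro a t
    rw [zpow_add₀ hρ0, zpow_mul, hρz, one_zpow, mul_one]
  have hmod : ∀ a b' : ℤ, a ≡ b' [ZMOD (n:ℤ)] → ρ ^ a = ρ ^ b' := by
    intro a b' h
    obtain ⟨t, ht⟩ := Int.ModEq.dvd h
    have hb : b' = a + (n:ℤ) * t := by omega
    rw [hb, hper]
  have habs : ‖ρ‖ = 1 := by
    have h1 : ‖ρ‖ ^ n = 1 ^ n := by rw [← norm_pow, hρ, norm_one, one_pow]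
    exact (pow_left_strictMonoOn₀ (by omega : n ≠ 0)).injOn
      (Set.mem_setOf.mpr (norm_nonneg ρ)) (Set.mem_setOf.mpr zero_le_one) h1
  have habsm : ‖ρ ^ (-m)‖ = 1 := by
    rw [norm_zpow, habs, one_zpow]
  set σ : ℕ → ℕ := fun j => (((j:ℤ) - m) % n).toNat with hσ
  set τ : ℕ → ℕ := fun j => (((j:ℤ) + m) % n).toNat with hτ
  have hσmem : ∀ j, σ j ∈ Finset.range n := by
    intro j
    simp only [hσ, Finset.mem_range]
    have h1 := Int.emod_nonneg ((j:ℤ) - m) (by omega : (n:ℤ) ≠ 0)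
    have h2 := Int.emod_lt_of_pos ((j:ℤ) - m) hn0
    omega
  have hτmem : ∀ j, τ j ∈ Finset.range n := by
    intro j
    simp only [hτ, Finset.mem_range]
    have h1 := Int.emod_nonneg ((j:ℤ) + m) (by omega : (n:ℤ) ≠ 0)
    have h2 := Int.emod_lt_of_pos ((j:ℤ) + m) hn0
    omega
  have hσcast : ∀ j : ℕ, ((σ j : ℕ) : ℤ) = ((j:ℤ) - m) % n := by
    intro j
    have h1 := Int.emod_nonneg ((j:ℤ) - m) (by omega : (n:ℤ) ≠ 0)
    simp only [hσ]
    exact Int.toNat_of_nonneg h1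
  have hτσ : ∀ j ∈ Finset.range n, τ (σ j) = j := by
    intro j hj
    simp only [Finset.mem_range] at hj
    simp only [hτ]
    rw [hσcast j]
    have h4 : (((j:ℤ) - m) % n + m) % n = (j : ℤ) % n := by
      conv_lhs => rw [Int.add_emod, Int.emod_emod_of_dvd _ dvd_rfl, ← Int.add_emod]
      ring_nf
    have h5 : ((j:ℤ)) % n = j := Int.emod_eq_of_lt (by positivity) (by exact_mod_cast hj)
    omega
  have hστ : ∀ j ∈ Finset.range n, σ (τ j) = j := by
    intro j hj
    simp only [Finset.mem_range] at hj
    have h1 := Int.emod_nonneg ((j:ℤ) + m) (by omega : (n:ℤ) ≠ 0)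
    simp only [hσ, hτ]
    rw [Int.toNat_of_nonneg h1]
    have h4 : (((j:ℤ) + m) % n - m) % n = (j : ℤ) % n := by
      conv_lhs => rw [Int.sub_emod, Int.emod_emod_of_dvd _ dvd_rfl, ← Int.sub_emod]
      ring_nf
    have h5 : ((j:ℤ)) % n = j := Int.emod_eq_of_lt (by positivity) (by exact_mod_cast hj)
    omega
  have hkey : ∀ (i : Fin d) (j : ℕ), ρ ^ (-m) * w + aa i j = ρ ^ (-m) * (w + aa i (σ j)) := by
    intro i j
    rw [haa, haa]
    have hz : ρ ^ (-m) * ρ ^ (-(σ j : ℤ)) = ρ ^ (-(j:ℤ)) := by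
      rw [← zpow_add₀ hρ0]
      apply hmod
      have h1 : ((σ j : ℤ)) ≡ (j:ℤ) - m [ZMOD (n:ℤ)] := by
        rw [hσcast j]; exact (Int.emod_emod_of_dvd _ dvd_rfl)
      calc -m + -(σ j : ℤ) ≡ -m + -((j:ℤ) - m) [ZMOD (n:ℤ)] := Int.ModEq.add_left _ h1.neg
        _ = -(j:ℤ) := by ring
    calc ρ ^ (-m) * w + -(starRingEnd ℂ) (c i) * ρ ^ (-(j:ℤ))
        = ρ ^ (-m) * w + -(starRingEnd ℂ) (c i) * (ρ ^ (-m) * ρ ^ (-(σ j : ℤ))) := by rw [hz]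
      _ = ρ ^ (-m) * (w + -(starRingEnd ℂ) (c i) * ρ ^ (-(σ j : ℤ))) := by ring
  have hΔkey : ∀ (i : Fin d) (j : ℕ), Δ i j (ρ ^ (-m) * w) = Δ i (σ j) w := by
    intro i j
    rw [hΔ, hΔ, hkey, norm_mul, habsm, one_mul]
  rw [hδ, hδ, Finset.mul_sum]
  refine Finset.sum_congr rfl fun i _ => ?_
  rw [Finset.mul_sum]
  refine Finset.sum_nbij' σ τ (fun j _ => hσmem j) (fun j _ => hτmem j) hτσ hστ ?_
  · intro j hj
    rw [hΔkey, hkey]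
    rw [zpow_neg]
    simp only [div_eq_mul_inv, mul_inv, inv_inv]
    ring
end
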